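/- arXiv:1309.4936 — 2 statements merged into one kernel-verified Lean document; each statement's English description precedes it below -/
import Mathlib

section
/- Let P_δ(t) = P₀·e^{t/(Kα)} − e^{t/(Kα)}·∫₀ᵗ e^{−τ/(Kα)} δ(τ) dτ be the biomass trajectory corresponding to a deviation δ ≥ 0 from the capacity-saturated uptake rate. If δ is continuous, nonnegative, and strictly positive at some point of (0, t_f), then the discounted biomass integral J₂(δ) = ∫₀^{t_f} P_δ(t)·e^{−φt} dt is strictly smaller than J₂(0) = P₀·∫₀^{t_f} e^{t/(Kα)}·e^{−φt} dt. -/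
open MeasureTheory intervalIntegral

/-- Any nonzero deviation `δ ≥ 0` from the capacity-saturated uptake rate
strictly decreases the discounted biomass integral. -/
theorem deviation_strictly_decreases_discounted_biomass
    (K α φ P₀ tf : ℝ) (hK : 0 < K) (hα : 0 < α) (hφ : 0 ≤ φ) (hP₀ : 0 < P₀)
    (htf : 0 < tf)
    (δ : ℝ → ℝ) (hδc : Continuous δ)
    (hδpos : ∀ t ∈ Set.Icc (0:ℝ) tf, 0 ≤ δ t)
    (tstar : ℝ) (htstar : tstar ∈ Set.Ioo (0:ℝ) tf) (hδstar : 0 < δ tstar) :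
    (∫ t in (0:ℝ)..tf,
        (P₀ * Real.exp (t / (K * α)) -
          Real.exp (t / (K * α)) * ∫ τ in (0:ℝ)..t, Real.exp (-τ / (K * α)) * δ τ) *
        Real.exp (-φ * t)) <
      P₀ * ∫ t in (0:ℝ)..tf, Real.exp (t / (K * α)) * Real.exp (-φ * t) := by
  have hcpos : 0 < K * α := mul_pos hK hα
  set c : ℝ := K * α with hc
  set h : ℝ → ℝ := fun τ => Real.exp (-τ / c) * δ τ with hh
  have hhc : Continuous h := by
    exact (Real.continuous_exp.comp ((continuous_id.neg).div_const c)).mul hδc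
  have hhi : ∀ a b : ℝ, IntervalIntegrable h volume a b := fun a b =>
    hhc.intervalIntegrable a b
  set g : ℝ → ℝ := fun t => ∫ τ in (0:ℝ)..t, h τ with hg
  have hgc : Continuous g := intervalIntegral.continuous_primitive hhi 0
  -- h nonneg on [0, tf]
  have hhnn : ∀ τ ∈ Set.Icc (0:ℝ) tf, 0 ≤ h τ := fun τ hτ =>
    mul_nonneg (Real.exp_nonneg _) (hδpos τ hτ)
  have hgnn : ∀ t ∈ Set.Icc (0:ℝ) tf, 0 ≤ g t := by
    intro t ht
    apply intervalIntegral.integral_nonneg ht.1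
    intro τ hτ
    exact hhnn τ ⟨hτ.1, hτ.2.trans ht.2⟩
  -- monotonicity of g on [0, tf]
  have hgmono : ∀ a b : ℝ, 0 ≤ a → a ≤ b → b ≤ tf → g a ≤ g b := by
    intro a b ha hab hb
    have hsplit : g a + (∫ τ in a..b, h τ) = g b :=
      intervalIntegral.integral_add_adjacent_intervals (hhi 0 a) (hhi a b)
    have : 0 ≤ ∫ τ in a..b, h τ := by
      apply intervalIntegral.integral_nonneg hab
      intro τ hτ
      exact hhnn τ ⟨ha.trans hτ.1, hτ.2.trans hb⟩
    linarith
  -- find an interval around tstar where δ is positive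
  obtain ⟨ε, hε, hball⟩ : ∃ ε > 0, Metric.ball tstar ε ⊆ {x | 0 < δ x} := by
    have hopen : IsOpen {x | 0 < δ x} := isOpen_lt continuous_const hδc
    exact Metric.isOpen_iff.mp hopen tstar hδstar
  set a : ℝ := max (tstar - ε/2) (tstar/2) with ha
  set b : ℝ := min (tstar + ε/2) ((tstar + tf)/2) with hb
  obtain ⟨htspos, htslt⟩ := htstar
  have hapos : 0 < a := lt_max_of_lt_right (by linarith)
  have hats : a < tstar := max_lt (by linarith) (by linarith)
  have htsb : tstar < b := lt_min (by linarith) (by linarith)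
  have hbtf : b < tf := min_lt_of_right_lt (by linarith)
  have hab : a < b := hats.trans htsb
  have hsub : ∀ x ∈ Set.Icc a b, 0 < δ x := by
    intro x hx
    apply hball
    rw [Metric.mem_ball, Real.dist_eq, abs_lt]
    constructor
    · have : tstar - ε/2 ≤ a := le_max_left _ _
      linarith [hx.1]
    · have : b ≤ tstar + ε/2 := min_le_left _ _
      linarith [hx.2]
  -- g b > 0
  have hgbpos : 0 < g b := by
    have hsplit : g a + (∫ τ in a..b, h τ) = g b :=
      intervalIntegral.integral_add_adjacent_intervals (hhi 0 a) (hhi a b)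
    have h1 : 0 ≤ g a := hgnn a ⟨hapos.le, by linarith⟩
    have h2 : 0 < ∫ τ in a..b, h τ := by
      apply intervalIntegral.intervalIntegral_pos_of_pos_on (hhi a b) _ hab
      intro x hx
      exact mul_pos (Real.exp_pos _) (hsub x ⟨hx.1.le, hx.2.le⟩)
    linarith
  -- the correction term F
  set F : ℝ → ℝ := fun t => Real.exp (t / c) * g t * Real.exp (-φ * t) with hF
  have hFc : Continuous F := by
    exact ((Real.continuous_exp.comp (continuous_id.div_const c)).mul hgc).mul
      (Real.continuous_exp.comp (continuous_const.mul continuous_id))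
  have hFi : ∀ u v : ℝ, IntervalIntegrable F volume u v := fun u v =>
    hFc.intervalIntegrable u v
  have hFpos : 0 < ∫ t in (0:ℝ)..tf, F t := by
    have hsplit : (∫ t in (0:ℝ)..b, F t) + (∫ t in b..tf, F t) = ∫ t in (0:ℝ)..tf, F t :=
      intervalIntegral.integral_add_adjacent_intervals (hFi 0 b) (hFi b tf)
    have h1 : 0 ≤ ∫ t in (0:ℝ)..b, F t := by
      apply intervalIntegral.integral_nonneg (by linarith)
      intro t ht
      exact mul_nonneg (mul_nonneg (Real.exp_nonneg _)
        (hgnn t ⟨ht.1, ht.2.trans hbtf.le⟩)) (Real.exp_nonneg _)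
    have h2 : 0 < ∫ t in b..tf, F t := by
      apply intervalIntegral.intervalIntegral_pos_of_pos_on (hFi b tf) _ hbtf
      intro x hx
      have : 0 < g x := lt_of_lt_of_le hgbpos
        (hgmono b x (by linarith) hx.1.le hx.2.le)
      exact mul_pos (mul_pos (Real.exp_pos _) this) (Real.exp_pos _)
    linarith
  -- rewrite the goal
  have hcont1 : Continuous fun t => P₀ * Real.exp (t / c) * Real.exp (-φ * t) := by
    exact ((continuous_const.mul (Real.continuous_exp.comp (continuous_id.div_const c))).mul
      (Real.continuous_exp.comp (continuous_const.mul continuous_id)))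
  show (∫ t in (0:ℝ)..tf, (P₀ * Real.exp (t / c) - Real.exp (t / c) * g t)
          * Real.exp (-φ * t)) <
      P₀ * ∫ t in (0:ℝ)..tf, Real.exp (t / c) * Real.exp (-φ * t)
  have heq : (∫ t in (0:ℝ)..tf, (P₀ * Real.exp (t / c) - Real.exp (t / c) * g t)
          * Real.exp (-φ * t))
      = (∫ t in (0:ℝ)..tf, P₀ * Real.exp (t / c) * Real.exp (-φ * t))
        - ∫ t in (0:ℝ)..tf, F t := by
    rw [← intervalIntegral.integral_sub (hcont1.intervalIntegrable 0 tf) (hFi 0 tf)]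
    congr 1
    funext t
    simp [hF]
    ring
  rw [heq, ← intervalIntegral.integral_const_mul]
  have : (fun t => P₀ * (Real.exp (t / c) * Real.exp (-φ * t)))
      = fun t => P₀ * Real.exp (t / c) * Real.exp (-φ * t) := by
    funext t; ring
  rw [this]
  linarith
end

section
/- Among all continuous nonnegative uptake fluxes satisfying the capacity constraint V_y(t) ≤ P(t)/K (with Ṗ = V_y/α, P(0) = P₀ > 0), the minimal time t_f such that ∫₀^{t_f} V_y(τ) dτ = Y₀ is achieved by V_y = P/K, and this minimal time equals Kα·log(1 + Y₀/(αP₀)). -/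
/-- Time-optimality of the capacity-saturated uptake: any admissible control
needs at least `Kα·log(1 + Y₀/(αP₀))` time to consume the nutrient, and the
saturated control achieves this bound. -/
theorem minimal_metabolization_time
    (K α P₀ Y₀ : ℝ) (hK : 0 < K) (hα : 0 < α) (hP₀ : 0 < P₀) (hY₀ : 0 < Y₀) :
    (∀ (Vy P : ℝ → ℝ), Continuous Vy → P 0 = P₀ →
      (∀ t ≥ (0:ℝ), HasDerivAt P (Vy t / α) t) →
      (∀ t ≥ (0:ℝ), 0 ≤ Vy t ∧ Vy t ≤ P t / K) →
      ∀ tf ≥ (0:ℝ), (∫ τ in (0:ℝ)..tf, Vy τ) = Y₀ →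
        K * α * Real.log (1 + Y₀ / (α * P₀)) ≤ tf) ∧
    (∫ τ in (0:ℝ)..(K * α * Real.log (1 + Y₀ / (α * P₀))),
        (P₀ * Real.exp (τ / (K * α))) / K) = Y₀ := by
  have hKα : (0:ℝ) < K * α := mul_pos hK hα
  have harg : (0:ℝ) < 1 + Y₀ / (α * P₀) := by positivity
  constructor
  · intro Vy P hVc hP0 hPd hbd tf htf hint
    -- FTC: ∫₀^{tf} Vy/α = P tf - P 0
    have hFTC : (∫ τ in (0:ℝ)..tf, Vy τ / α) = P tf - P 0 := by
      apply intervalIntegral.integral_eq_sub_of_hasDerivAt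
      · intro t ht
        rw [Set.uIcc_of_le htf] at ht
        exact hPd t ht.1
      · exact (hVc.div_const α).intervalIntegrable _ _
    have hint' : (∫ τ in (0:ℝ)..tf, Vy τ / α) = Y₀ / α := by
      rw [intervalIntegral.integral_div, hint]
    have hPtf : P tf = P₀ + Y₀ / α := by
      have h := hFTC.symm.trans hint'
      rw [hP0] at h; linarith
    -- Grönwall
    have hgron := norm_le_gronwallBound_of_norm_deriv_right_le
      (f := P) (f' := fun t => Vy t / α) (δ := ‖P 0‖) (K := 1 / (K * α)) (ε := 0)
      (a := 0) (b := tf)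
      (fun x hx => ((hPd x hx.1).continuousAt).continuousWithinAt)
      (fun x hx => ((hPd x hx.1).hasDerivWithinAt))
      le_rfl
      (by
        intro x hx
        obtain ⟨h1, h2⟩ := hbd x hx.1
        have hx1 : ‖Vy x / α‖ = Vy x / α := by
          rw [Real.norm_eq_abs, abs_of_nonneg (by positivity)]
        have hx2 : P x ≤ ‖P x‖ := le_abs_self _
        rw [hx1, add_zero]
        have key : Vy x / α ≤ ‖P x‖ / K / α := by
          have : P x / K ≤ ‖P x‖ / K := by gcongr
          exact div_le_div_of_nonneg_right (h2.trans this) hα.le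
        calc Vy x / α ≤ ‖P x‖ / K / α := key
          _ = 1 / (K * α) * ‖P x‖ := by field_simp)
    have htf2 := hgron tf ⟨htf, le_rfl⟩
    rw [gronwallBound_ε0, sub_zero] at htf2
    have hP0n : ‖P 0‖ = P₀ := by rw [hP0, Real.norm_eq_abs, abs_of_pos hP₀]
    rw [hP0n] at htf2
    have hle : P₀ + Y₀ / α ≤ P₀ * Real.exp (1 / (K * α) * tf) :=
      le_trans (by rw [← hPtf]; exact le_abs_self _) htf2
    have hdiv : 1 + Y₀ / (α * P₀) ≤ Real.exp (1 / (K * α) * tf) := by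
      have heq : 1 + Y₀ / (α * P₀) = (P₀ + Y₀ / α) / P₀ := by field_simp
      rw [heq, div_le_iff₀ hP₀, mul_comm]
      exact hle
    have hlog := Real.log_le_log harg hdiv
    rw [Real.log_exp] at hlog
    calc K * α * Real.log (1 + Y₀ / (α * P₀)) ≤ K * α * (1 / (K * α) * tf) := by
          exact mul_le_mul_of_nonneg_left hlog hKα.le
      _ = tf := by field_simp
  · -- achievability
    have h1 : (∫ τ in (0:ℝ)..(K * α * Real.log (1 + Y₀ / (α * P₀))),
        (P₀ * Real.exp (τ / (K * α))) / K)
        = (P₀ / K) * ∫ τ in (0:ℝ)..(K * α * Real.log (1 + Y₀ / (α * P₀))),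
            Real.exp (τ / (K * α)) := by
      rw [← intervalIntegral.integral_const_mul]
      congr 1; ext τ; ring
    rw [h1, intervalIntegral.integral_comp_div (f := Real.exp) hKα.ne']
    rw [integral_exp]
    rw [zero_div]
    have h2 : K * α * Real.log (1 + Y₀ / (α * P₀)) / (K * α)
        = Real.log (1 + Y₀ / (α * P₀)) := by field_simp
    rw [h2, Real.exp_log harg, Real.exp_zero, smul_eq_mul]
    field_simp
    ring
end
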